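/- arXiv:1403.3630 — 2 statements merged into one kernel-verified Lean document; each statement's English description precedes it below -/
import Mathlib

section
/- For any even integer n ≥ 4, the Euler identity holds: -(n+1)·B_n = Σ_{k=2}^{n-2} C(n,k)·B_k·B_{n-k}, where B_k are the Bernoulli numbers. -/
open PowerSeries Finset

private lemma psDerivExp : d⁄dX ℚ (exp ℚ) = exp ℚ := by
  ext n
  rw [coeff_derivative, coeff_exp, coeff_exp]
  simp only [Algebra.algebraMap_self, RingHom.id_apply, Nat.factorial_succ]
  have h1 : ((n : ℚ) + 1) ≠ 0 := by positivity
  have h2 : ((n.factorial : ℚ)) ≠ 0 := by exact_mod_cast n.factorial_ne_zero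
  push_cast
  field_simp

private lemma key_ps : (bernoulliPowerSeries ℚ) ^ 2 =
    bernoulliPowerSeries ℚ - X * bernoulliPowerSeries ℚ
      - X * d⁄dX ℚ (bernoulliPowerSeries ℚ) := by
  set B := bernoulliPowerSeries ℚ with hB
  have h1 : B * (exp ℚ - 1) = X := bernoulliPowerSeries_mul_exp_sub_one ℚ
  have h2 : d⁄dX ℚ B * (exp ℚ - 1) + B * exp ℚ = 1 := by
    have hd := congrArg (d⁄dX ℚ) h1
    rw [Derivation.leibniz, smul_eq_mul, smul_eq_mul, map_sub, psDerivExp,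
      Derivation.map_one_eq_zero, sub_zero, derivative_X] at hd
    linear_combination hd
  linear_combination (-(B + d⁄dX ℚ B)) * h1 + B * h2

private lemma conv (n : ℕ) :
    ∑ k ∈ Finset.range (n + 1), (n.choose k : ℚ) * bernoulli k * bernoulli (n - k)
      = (1 - n) * bernoulli n - n * bernoulli (n - 1) := by
  rcases n with _ | m
  · simp
  have hcoef := congrArg (fun f => coeff (m + 1) f) key_ps
  rw [sq, coeff_mul, Finset.Nat.sum_antidiagonal_eq_sum_range_succ_mk, map_sub, map_sub,
    coeff_succ_X_mul, coeff_succ_X_mul, coeff_derivative] at hcoef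
  simp only [bernoulliPowerSeries, coeff_mk, Algebra.algebraMap_self, RingHom.id_apply,
    Nat.succ_eq_add_one] at hcoef
  have hfac : ∀ k : ℕ, (k.factorial : ℚ) ≠ 0 := fun k => by exact_mod_cast k.factorial_ne_zero
  have key : ∑ k ∈ Finset.range (m + 1 + 1), ((m + 1).choose k : ℚ) * bernoulli k
        * bernoulli (m + 1 - k)
      = ((m + 1).factorial : ℚ) * ∑ k ∈ Finset.range (m + 1 + 1),
          bernoulli k / k.factorial * (bernoulli (m + 1 - k) / (m + 1 - k).factorial) := by
    rw [Finset.mul_sum]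
    refine Finset.sum_congr rfl fun k hk => ?_
    have hkn : k ≤ m + 1 := Nat.lt_succ_iff.mp (Finset.mem_range.mp hk)
    rw [Nat.cast_choose ℚ hkn]
    field_simp
  rw [key, hcoef, Nat.add_sub_cancel, Nat.factorial_succ]
  push_cast
  field_simp
  ring

/-- Euler's identity for Bernoulli numbers: for even `n ≥ 4`,
`-(n+1)·B_n = ∑_{k=2}^{n-2} C(n,k)·B_k·B_{n-k}`. -/
theorem euler_identity (n : ℕ) (hn : Even n) (h4 : 4 ≤ n) :
    -((n : ℚ) + 1) * bernoulli n =
      ∑ k ∈ Finset.Icc 2 (n - 2), (n.choose k : ℚ) * bernoulli k * bernoulli (n - k) := by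
  have hodd : bernoulli (n - 1) = 0 := by
    rw [bernoulli, bernoulli'_eq_zero_of_odd (by
        rcases hn with ⟨r, hr⟩
        exact Nat.Even.sub_odd (by omega) (by exact ⟨r, by omega⟩) odd_one) (by omega), mul_zero]
  have hsplit : Finset.range (n + 1) =
      insert 0 (insert 1 (insert (n - 1) (insert n (Finset.Icc 2 (n - 2))))) := by
    ext k
    simp only [Finset.mem_range, Finset.mem_insert, Finset.mem_Icc]
    omega
  have hc := conv n
  rw [hsplit] at hc
  rw [Finset.sum_insert (by simp; omega), Finset.sum_insert (by simp; omega),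
    Finset.sum_insert (by simp; omega), Finset.sum_insert (by simp; omega)] at hc
  simp only [Nat.choose_zero_right, Nat.choose_one_right, Nat.choose_self,
    Nat.sub_zero, Nat.sub_self, bernoulli_zero, bernoulli_one, hodd,
    Nat.sub_sub_self (by omega : 1 ≤ n)] at hc
  push_cast at hc
  linarith [hc]
end

section
/- For any even integer n ≥ 4, Miki's identity holds: 2·H_n·B_n = Σ_{k=2}^{n-2} (n/(k(n-k)))·(1 - C(n,k))·B_k·B_{n-k}, where H_n = Σ_{j=1}^n 1/j is the n-th harmonic number. -/
set_option linter.unusedSectionVars false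
open PowerSeries Finset

namespace Miki

variable {R : Type*} [CommRing R] [Algebra ℚ R]

noncomputable def expS (M : R⟦X⟧) : R⟦X⟧ :=
  PowerSeries.mk fun n => ∑ m ∈ range (n+1), (m.factorial : ℚ)⁻¹ • (coeff n (M ^ m))

lemma coeff_pow_zero_of_lt {M : R⟦X⟧} (hM : constantCoeff M = 0) {n m : ℕ} (h : n < m) :
    coeff n (M ^ m) = 0 := by
  have hX : (X : R⟦X⟧) ∣ M := X_dvd_iff.mpr hM
  exact (X_pow_dvd_iff.mp (pow_dvd_pow_of_dvd hX m)) n h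

lemma coeff_expS {M : R⟦X⟧} (hM : constantCoeff M = 0) {n N : ℕ} (h : n < N) :
    coeff n (expS M) = ∑ m ∈ range N, (m.factorial : ℚ)⁻¹ • (coeff n (M ^ m)) := by
  rw [expS, coeff_mk]
  apply Finset.sum_subset (range_subset_range.mpr h)
  intro m _ hm
  rw [coeff_pow_zero_of_lt hM (by simpa using hm), smul_zero]

@[simp] lemma constantCoeff_expS (M : R⟦X⟧) : constantCoeff (expS M) = 1 := by
  have : constantCoeff (expS M) = coeff 0 (expS M) := by simp
  rw [this, expS, coeff_mk]
  simp

lemma expS_zero : expS (0 : R⟦X⟧) = 1 := by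
  ext n
  rw [expS, coeff_mk]
  rcases Nat.eq_zero_or_pos n with h | h
  · subst h; simp
  · rw [PowerSeries.coeff_one, if_neg h.ne']
    apply Finset.sum_eq_zero
    intro m hm
    rcases Nat.eq_zero_or_pos m with h0 | h0
    · subst h0; simp [PowerSeries.coeff_one, h.ne']
    · rw [zero_pow h0.ne', map_zero, smul_zero]

/-- cancel `(n+1) : R` in a ℚ-algebra -/
lemma cancel_succ {n : ℕ} {x y : R} (h : x * ((n : R) + 1) = y * ((n : R) + 1)) : x = y := by
  have hn : ((n : R) + 1) = algebraMap ℚ R ((n : ℚ) + 1) := by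
    rw [map_add, map_natCast, map_one]
  have hinv : ((n : R) + 1) * algebraMap ℚ R (((n : ℚ) + 1)⁻¹) = 1 := by
    rw [hn, ← map_mul, mul_inv_cancel₀ (by positivity), map_one]
  calc x = x * (((n : R) + 1) * algebraMap ℚ R (((n : ℚ) + 1)⁻¹)) := by rw [hinv, mul_one]
    _ = y * (((n : R) + 1) * algebraMap ℚ R (((n : ℚ) + 1)⁻¹)) := by
        rw [← mul_assoc, ← mul_assoc, h]
    _ = y := by rw [hinv, mul_one]

lemma ode_unique {P F G : R⟦X⟧} (h0 : constantCoeff F = constantCoeff G)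
    (hF : d⁄dX R F = P * F) (hG : d⁄dX R G = P * G) : F = G := by
  ext n
  induction n using Nat.strong_induction_on with
  | _ n ih =>
    match n with
    | 0 => simpa using h0
    | n + 1 =>
      apply cancel_succ (n := n)
      rw [← coeff_derivative F n, ← coeff_derivative G n, hF, hG, coeff_mul, coeff_mul]
      apply Finset.sum_congr rfl
      intro p hp
      rw [Finset.HasAntidiagonal.mem_antidiagonal] at hp
      have : p.2 < n + 1 := by omega
      rw [ih p.2 this]

lemma derivative_expS {M : R⟦X⟧} (hM : constantCoeff M = 0) :
    d⁄dX R (expS M) = (d⁄dX R M) * expS M := by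
  ext n
  have key : ∀ m : ℕ, (m.factorial : ℚ)⁻¹ • coeff n ((d⁄dX R M) * M ^ m)
      = ((m+1).factorial : ℚ)⁻¹ • (coeff (n+1) (M ^ (m+1)) * ((n : R)+1)) := by
    intro m
    have hd : coeff (n+1) (M ^ (m+1)) * ((n : R)+1) = coeff n (d⁄dX R (M ^ (m+1))) :=
      (coeff_derivative _ n).symm
    have hl : d⁄dX R (M ^ (m+1)) = (m+1) • (M ^ m • d⁄dX R M) := by
      simpa using Derivation.leibniz_pow (d⁄dX R) M (m+1)
    rw [hd, hl]
    have : coeff n ((m+1) • (M ^ m • d⁄dX R M)) = (m+1) • coeff n (M ^ m * d⁄dX R M) := by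
      rw [smul_eq_mul]; exact map_nsmul _ _ _
    rw [this, ← Nat.cast_smul_eq_nsmul ℚ, smul_smul]
    rw [mul_comm (M ^ m) (d⁄dX R M)]
    congr 1
    rw [Nat.factorial_succ]
    push_cast
    rw [mul_inv_rev, mul_assoc, inv_mul_cancel₀ (by positivity), mul_one]
  calc coeff n (d⁄dX R (expS M))
      = coeff (n+1) (expS M) * ((n : R)+1) := by rw [coeff_derivative]
    _ = (∑ m ∈ range (n+2), (m.factorial : ℚ)⁻¹ • coeff (n+1) (M ^ m)) * ((n:R)+1) := by
        rw [coeff_expS hM (Nat.lt_succ_self (n+1))]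
    _ = ∑ m ∈ range (n+2), ((m.factorial : ℚ)⁻¹ • coeff (n+1) (M ^ m)) * ((n:R)+1) := by
        rw [Finset.sum_mul]
    _ = ∑ m ∈ range (n+1), (((m+1).factorial : ℚ)⁻¹ • coeff (n+1) (M ^ (m+1))) * ((n:R)+1) := by
        rw [Finset.sum_range_succ']
        simp [PowerSeries.coeff_one]
    _ = ∑ m ∈ range (n+1), (m.factorial : ℚ)⁻¹ • coeff n ((d⁄dX R M) * M ^ m) := by
        refine Finset.sum_congr rfl fun m _ => ?_
        rw [key m, smul_mul_assoc]
    _ = coeff n ((d⁄dX R M) * expS M) := by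
        rw [coeff_mul]
        have step : ∀ p ∈ antidiagonal n,
            coeff p.1 (d⁄dX R M) * coeff p.2 (expS M)
            = ∑ m ∈ range (n+1), (m.factorial : ℚ)⁻¹ •
                (coeff p.1 (d⁄dX R M) * coeff p.2 (M ^ m)) := by
          intro p hp
          rw [Finset.HasAntidiagonal.mem_antidiagonal] at hp
          rw [coeff_expS hM (show p.2 < n+1 by omega), Finset.mul_sum]
          exact Finset.sum_congr rfl fun m _ => (mul_smul_comm _ _ _)
        rw [Finset.sum_congr rfl step, Finset.sum_comm]
        refine Finset.sum_congr rfl fun m _ => ?_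
        rw [coeff_mul, Finset.smul_sum]

lemma expS_add {A B : R⟦X⟧} (hA : constantCoeff A = 0) (hB : constantCoeff B = 0) :
    expS (A + B) = expS A * expS B := by
  have h0 : constantCoeff (expS (A+B)) = constantCoeff (expS A * expS B) := by
    rw [map_mul]
    simp [show constantCoeff (expS (A+B)) = coeff 0 (expS (A+B)) by simp,
      show constantCoeff (expS A) = coeff 0 (expS A) by simp,
      show constantCoeff (expS B) = coeff 0 (expS B) by simp, expS, coeff_mk]
  refine ode_unique (P := d⁄dX R A + d⁄dX R B) h0 ?_ ?_
  · rw [derivative_expS (by rw [map_add, hA, hB, add_zero]), map_add]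
  · have : d⁄dX R (expS A * expS B)
        = expS A • d⁄dX R (expS B) + expS B • d⁄dX R (expS A) := Derivation.leibniz _ _ _
    rw [this, derivative_expS hA, derivative_expS hB, smul_eq_mul, smul_eq_mul]
    ring

lemma expS_nsmul {M : R⟦X⟧} (hM : constantCoeff M = 0) (k : ℕ) :
    expS (k • M) = expS M ^ k := by
  induction k with
  | zero => rw [zero_smul, pow_zero, expS_zero]
  | succ k ih =>
      rw [succ_nsmul, expS_add (by rw [map_nsmul, hM, smul_zero]) hM, ih, pow_succ]

lemma map_expS {S : Type*} [CommRing S] [Algebra ℚ S] (f : R →+* S)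
    (hf : ∀ (q : ℚ) (x : R), f (q • x) = q • f x) (M : R⟦X⟧) :
    PowerSeries.map f (expS M) = expS (PowerSeries.map f M) := by
  ext n
  rw [coeff_map, expS, expS, coeff_mk, coeff_mk, map_sum]
  refine Finset.sum_congr rfl fun m _ => ?_
  rw [hf, ← map_pow, coeff_map]

/-! ### Concrete series over ℚ -/

noncomputable def Eser : ℚ⟦X⟧ := PowerSeries.mk fun n => ((n+1).factorial : ℚ)⁻¹

noncomputable def Lser : ℚ⟦X⟧ :=
  PowerSeries.mk fun n => if n = 0 then 0 else bernoulli' n / (n * n.factorial)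

noncomputable def lgeo (c : ℚ) : ℚ⟦X⟧ :=
  PowerSeries.mk fun n => if n = 0 then 0 else c ^ n / n

noncomputable def geo (c : ℚ) : ℚ⟦X⟧ := PowerSeries.mk fun n => c ^ n

@[simp] lemma constantCoeff_Lser : constantCoeff Lser = 0 := by
  rw [← coeff_zero_eq_constantCoeff_apply, Lser, coeff_mk]; simp

@[simp] lemma constantCoeff_lgeo (c : ℚ) : constantCoeff (lgeo c) = 0 := by
  rw [← coeff_zero_eq_constantCoeff_apply, lgeo, coeff_mk]; simp

lemma coeff_d_lgeo (c : ℚ) (i : ℕ) : coeff i (d⁄dX ℚ (lgeo c)) = c ^ (i+1) := by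
  rw [coeff_derivative, lgeo, coeff_mk, if_neg (Nat.succ_ne_zero i)]
  rw [div_mul_eq_mul_div, mul_div_assoc]
  push_cast
  rw [div_self (by positivity), mul_one]

lemma d_geo (c : ℚ) : d⁄dX ℚ (geo c) = (d⁄dX ℚ (lgeo c)) * geo c := by
  ext n
  rw [coeff_derivative, coeff_mul]
  have : ∀ p ∈ antidiagonal n, coeff p.1 (d⁄dX ℚ (lgeo c)) * coeff p.2 (geo c) = c ^ (n+1) := by
    intro p hp
    rw [Finset.HasAntidiagonal.mem_antidiagonal] at hp
    rw [coeff_d_lgeo, geo, coeff_mk, ← pow_add]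
    congr 1
    omega
  rw [Finset.sum_congr rfl this, Finset.sum_const, Nat.card_antidiagonal, nsmul_eq_mul]
  rw [geo, coeff_mk]
  push_cast
  ring

lemma expS_lgeo (c : ℚ) : expS (lgeo c) = geo c := by
  refine ode_unique (P := d⁄dX ℚ (lgeo c)) ?_ ?_ (d_geo c).symm.symm
  · rw [constantCoeff_expS, ← coeff_zero_eq_constantCoeff_apply, geo, coeff_mk, pow_zero]
  · exact derivative_expS (constantCoeff_lgeo c)

lemma geo_mul (c : ℚ) : geo c * (1 - C c * X) = 1 := by
  ext n
  rw [mul_sub, mul_one, map_sub, mul_left_comm, coeff_C_mul]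
  cases n with
  | zero => simp [geo, coeff_mk]
  | succ n =>
    rw [coeff_succ_mul_X, geo, coeff_mk, coeff_mk, PowerSeries.coeff_one, if_neg (Nat.succ_ne_zero n)]
    ring

lemma coeff_d_Lser (i : ℕ) :
    coeff i (d⁄dX ℚ Lser) = bernoulli' (i+1) / (i+1).factorial := by
  rw [coeff_derivative, Lser, coeff_mk, if_neg (Nat.succ_ne_zero i)]
  have h1 : ((i:ℚ)+1) ≠ 0 := by push_cast; positivity
  field_simp
  push_cast
  ring

lemma d_Eser : d⁄dX ℚ Eser = (d⁄dX ℚ Lser) * Eser := by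
  ext n
  rw [coeff_derivative, coeff_mul]
  rw [Finset.Nat.sum_antidiagonal_eq_sum_range_succ_mk]
  have hsb : ∑ i ∈ range (n+1), ((n+2).choose (i+1) : ℚ) * bernoulli' (i+1) = (n:ℚ) + 1 := by
    have h := sum_bernoulli' (n+2)
    rw [Finset.sum_range_succ'] at h
    simp only [Nat.choose_zero_right, Nat.cast_one, bernoulli'_zero, one_mul] at h
    push_cast at h ⊢
    linarith
  have hterm : ∀ i ∈ range (n+1),
      coeff i (d⁄dX ℚ Lser) * coeff (n - i) Eser
      = ((n+2).choose (i+1) : ℚ) * bernoulli' (i+1) / (n+2).factorial := by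
    intro i hi
    rw [Finset.mem_range] at hi
    have hnat : (n+2).choose (i+1) * (i+1).factorial * ((n-i)+1).factorial
        = (n+2).factorial := by
      have h2 := Nat.choose_mul_factorial_mul_factorial (show i+1 <= n+2 by omega)
      rwa [show n+2-(i+1) = (n-i)+1 by omega] at h2
    have hq : ((n+2).choose (i+1) : ℚ) * ((i+1).factorial : ℚ) * (((n-i)+1).factorial : ℚ)
        = ((n+2).factorial : ℚ) := by exact_mod_cast congrArg Nat.cast hnat
    rw [coeff_d_Lser, Eser, coeff_mk]
    have f1 : ((i+1).factorial : ℚ) ≠ 0 := by exact_mod_cast (i+1).factorial_ne_zero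
    have f2 : (((n-i)+1).factorial : ℚ) ≠ 0 := by exact_mod_cast ((n-i)+1).factorial_ne_zero
    have f3 : ((n+2).factorial : ℚ) ≠ 0 := by exact_mod_cast (n+2).factorial_ne_zero
    field_simp
    linear_combination (-(bernoulli' (i+1))) * hq
  rw [Finset.sum_congr rfl hterm, ← Finset.sum_div, hsb, Eser, coeff_mk,
    show (n+1)+1 = n+2 from rfl, inv_mul_eq_div]

lemma expS_Lser : expS Lser = Eser := by
  refine ode_unique (P := d⁄dX ℚ Lser) ?_ (derivative_expS constantCoeff_Lser) d_Eser
  rw [constantCoeff_expS, ← coeff_zero_eq_constantCoeff_apply, Eser, coeff_mk]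
  norm_num


/-! ### The two coefficient families -/

noncomputable def Sig (k : ℕ) : ℚ⟦X⟧ := ∑ j ∈ range k, lgeo ((j:ℚ)+1)

@[simp] lemma constantCoeff_Sig (k : ℕ) : constantCoeff (Sig k) = 0 := by
  rw [Sig, map_sum]
  exact Finset.sum_eq_zero fun j _ => constantCoeff_lgeo _

noncomputable def Hser (k : ℕ) : ℚ⟦X⟧ := expS (Sig k)

lemma Hser_succ (k : ℕ) : Hser (k+1) = Hser k * geo ((k:ℚ)+1) := by
  rw [Hser, Sig, Finset.sum_range_succ,
    expS_add (by simp) (constantCoeff_lgeo _), expS_lgeo]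
  rfl

noncomputable def aa (n k : ℕ) : ℚ := coeff n (Hser k)

lemma aa_zero (k : ℕ) : aa 0 k = 1 := by
  rw [aa, coeff_zero_eq_constantCoeff]
  exact constantCoeff_expS _

lemma aa_nzero (n : ℕ) : aa (n+1) 0 = 0 := by
  rw [aa, Hser, Sig, Finset.range_zero, Finset.sum_empty, expS_zero,
    PowerSeries.coeff_one, if_neg (Nat.succ_ne_zero n)]

lemma Hser_eq (k : ℕ) : Hser (k+1) * (1 - C ((k:ℚ)+1) * X) = Hser k := by
  rw [Hser_succ, mul_assoc, geo_mul, mul_one]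

lemma aa_rec (n k : ℕ) : aa (n+1) (k+1) = aa (n+1) k + ((k:ℚ)+1) * aa n (k+1) := by
  have h := congrArg (coeff (n+1)) (Hser_eq k)
  rw [mul_sub, mul_one, map_sub, mul_left_comm, coeff_C_mul, coeff_succ_mul_X] at h
  rw [aa, aa, aa, ← h]
  ring

@[simp] lemma constantCoeff_Eser : constantCoeff Eser = 1 := by
  rw [← coeff_zero_eq_constantCoeff_apply, Eser, coeff_mk]
  norm_num

noncomputable def bb (n k : ℕ) : ℚ :=
  (∏ i ∈ range n, ((k:ℚ) + i + 1)) * coeff n (Eser ^ k)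

lemma bb_zero (k : ℕ) : bb 0 k = 1 := by
  rw [bb, Finset.range_zero, Finset.prod_empty, one_mul,
    coeff_zero_eq_constantCoeff, map_pow, constantCoeff_Eser, one_pow]

lemma bb_nzero (n : ℕ) : bb (n+1) 0 = 0 := by
  rw [bb, pow_zero, PowerSeries.coeff_one, if_neg (Nat.succ_ne_zero n), mul_zero]

noncomputable def Wser : ℚ⟦X⟧ := Eser * X

lemma d_Wser : d⁄dX ℚ Wser = 1 + Wser := by
  ext n
  rw [coeff_derivative, map_add]
  cases n with
  | zero =>
    rw [Wser, coeff_succ_mul_X, Eser, coeff_mk]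
    norm_num
  | succ n =>
    rw [Wser, coeff_succ_mul_X, coeff_succ_mul_X, Eser, coeff_mk, coeff_mk,
      PowerSeries.coeff_one, if_neg (Nat.succ_ne_zero n), zero_add]
    have h1 : (((n+1)+1).factorial : ℚ) = ((n+2):ℚ) * ((n+1).factorial : ℚ) := by
      exact_mod_cast congrArg Nat.cast (Nat.factorial_succ (n+1))
    have f1 : ((n+1).factorial : ℚ) ≠ 0 := by exact_mod_cast (n+1).factorial_ne_zero
    rw [h1]
    push_cast
    rw [mul_inv_rev]
    field_simp
    ring

lemma coeff_Wpow (n k : ℕ) : coeff (n + k) (Wser ^ k) = coeff n (Eser ^ k) := by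
  rw [Wser, mul_pow, mul_comm, coeff_X_pow_mul]

lemma keyE (n k : ℕ) :
    ((n:ℚ) + (k:ℚ) + 2) * coeff (n+1) (Eser ^ (k+1))
      = ((k:ℚ)+1) * (coeff (n+1) (Eser ^ k) + coeff n (Eser ^ (k+1))) := by
  have hd : d⁄dX ℚ (Wser ^ (k+1)) = (k+1) • (Wser ^ k + Wser ^ (k+1)) := by
    have h0 := Derivation.leibniz_pow (d⁄dX ℚ) Wser (k+1)
    rw [Nat.add_sub_cancel, d_Wser, smul_eq_mul, mul_add, mul_one, ← pow_succ] at h0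
    exact h0
  have h := congrArg (coeff (n+1+k)) hd
  rw [coeff_derivative, map_nsmul, map_add] at h
  have e1 : coeff (n+1+k+1) (Wser ^ (k+1)) = coeff (n+1) (Eser ^ (k+1)) := by
    rw [show n+1+k+1 = (n+1)+(k+1) by omega]
    exact coeff_Wpow (n+1) (k+1)
  have e2 : coeff (n+1+k) (Wser ^ k) = coeff (n+1) (Eser ^ k) := coeff_Wpow (n+1) k
  have e3 : coeff (n+1+k) (Wser ^ (k+1)) = coeff n (Eser ^ (k+1)) := by
    rw [show n+1+k = n+(k+1) by omega]
    exact coeff_Wpow n (k+1)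
  rw [e1, e2, e3, nsmul_eq_mul] at h
  push_cast at h
  linarith [h]

lemma bb_rec (n k : ℕ) : bb (n+1) (k+1) = bb (n+1) k + ((k:ℚ)+1) * bb n (k+1) := by
  have hk := keyE n k
  have c1 : ((k+1:ℕ):ℚ) = (k:ℚ)+1 := by push_cast; ring
  rw [bb, bb, bb, c1]
  have p1 : ∏ i ∈ range (n+1), ((k:ℚ) + 1 + (i:ℚ) + 1)
      = (∏ i ∈ range n, ((k:ℚ) + 1 + (i:ℚ) + 1)) * ((k:ℚ) + (n:ℚ) + 2) := by
    rw [Finset.prod_range_succ]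
    ring
  have p2 : ∏ i ∈ range (n+1), ((k:ℚ) + (i:ℚ) + 1)
      = ((k:ℚ)+1) * ∏ i ∈ range n, ((k:ℚ) + 1 + (i:ℚ) + 1) := by
    rw [Finset.prod_range_succ']
    have he : ∀ i ∈ range n, ((k:ℚ) + (((i+1):ℕ):ℚ) + 1) = ((k:ℚ) + 1 + (i:ℚ) + 1) :=
      fun i _ => by push_cast; ring
    rw [Finset.prod_congr rfl he]
    push_cast
    ring
  rw [p1, p2]
  set P := ∏ i ∈ range n, ((k:ℚ) + 1 + (i:ℚ) + 1) with hP
  have p3 : ∏ i ∈ range n, ((k:ℚ) + 1 + (i:ℚ) + 1) = P := rfl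
  linear_combination P * hk

lemma aa_eq_bb : ∀ k n, aa n k = bb n k := by
  intro k
  induction k with
  | zero =>
    intro n
    cases n with
    | zero => rw [aa_zero, bb_zero]
    | succ n => rw [aa_nzero, bb_nzero]
  | succ k ih =>
    intro n
    induction n with
    | zero => rw [aa_zero, bb_zero]
    | succ n ihn => rw [aa_rec, bb_rec, ih (n+1), ihn]


/-! ### Polynomial side -/

noncomputable def Pp (m : ℕ) : Polynomial ℚ :=
  ∑ i ∈ range (m+1),
    Polynomial.C (bernoulli' i * ((m+1).choose i : ℚ) / ((m:ℚ)+1)) * Polynomial.X ^ (m+1-i)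

lemma eval_Pp (m k : ℕ) :
    (Pp m).eval (k:ℚ) = ∑ j ∈ range k, (((j:ℚ)+1))^m := by
  have h := sum_Ico_pow k m
  rw [Finset.sum_Ico_eq_sum_range] at h
  have hk : k + 1 - 1 = k := by omega
  rw [hk] at h
  have h2 : ∑ j ∈ range k, (((j:ℚ)+1))^m = ∑ j ∈ range k, ((1+j : ℕ):ℚ)^m := by
    refine Finset.sum_congr rfl fun j _ => ?_
    push_cast; ring
  rw [h2, h, Pp, Polynomial.eval_finset_sum]
  refine Finset.sum_congr rfl fun i _ => ?_
  rw [Polynomial.eval_mul, Polynomial.eval_C, Polynomial.eval_pow, Polynomial.eval_X]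
  ring

lemma coeff_Pp_zero (m : ℕ) : (Pp m).coeff 0 = 0 := by
  rw [Pp, Polynomial.finset_sum_coeff]
  refine Finset.sum_eq_zero fun i hi => ?_
  rw [Finset.mem_range] at hi
  rw [Polynomial.coeff_C_mul, Polynomial.coeff_X_pow, if_neg (by omega), mul_zero]

lemma coeff_Pp_one (m : ℕ) : (Pp m).coeff 1 = bernoulli' m := by
  rw [Pp, Polynomial.finset_sum_coeff]
  rw [Finset.sum_eq_single m]
  · rw [Polynomial.coeff_C_mul, Polynomial.coeff_X_pow, if_pos (by omega), mul_one]
    have : ((m+1).choose m : ℚ) = (m:ℚ)+1 := by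
      rw [Nat.choose_succ_self_right]; push_cast; ring
    rw [this, mul_div_assoc, div_self (by push_cast; positivity), mul_one]
  · intro i hi hne
    rw [Finset.mem_range] at hi
    rw [Polynomial.coeff_C_mul, Polynomial.coeff_X_pow, if_neg (by omega), mul_zero]
  · intro h
    exact absurd (Finset.self_mem_range_succ m) h

lemma coeff_Pp_two (m : ℕ) (hm : 1 ≤ m) : (Pp m).coeff 2 = (m:ℚ)/2 * bernoulli' (m-1) := by
  rw [Pp, Polynomial.finset_sum_coeff]
  rw [Finset.sum_eq_single (m-1)]
  · rw [Polynomial.coeff_C_mul, Polynomial.coeff_X_pow, if_pos (by omega), mul_one]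
    have : ((m+1).choose (m-1) : ℚ) = ((m:ℚ)+1) * (m:ℚ) / 2 := by
      have h1 : (m+1).choose (m-1) = (m+1).choose 2 := by
        rw [← Nat.choose_symm (by omega)]
        congr 1
        omega
      rw [h1, Nat.cast_choose_two]
      push_cast
      ring
    rw [this]
    have hne : ((m:ℚ)+1) ≠ 0 := by push_cast; positivity
    field_simp
  · intro i hi hne
    rw [Finset.mem_range] at hi
    rw [Polynomial.coeff_C_mul, Polynomial.coeff_X_pow, if_neg (by omega), mul_zero]
  · intro h
    exact absurd (Finset.mem_range.mpr (by omega)) h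

noncomputable def LP : (Polynomial ℚ)⟦X⟧ :=
  PowerSeries.mk fun m => if m = 0 then 0 else Polynomial.C ((m:ℚ))⁻¹ * Pp m

noncomputable def HP (n : ℕ) : Polynomial ℚ := coeff n (expS LP)

@[simp] lemma constantCoeff_LP : constantCoeff LP = 0 := by
  rw [← coeff_zero_eq_constantCoeff_apply, LP, coeff_mk]; simp

lemma map_LP (k : ℕ) :
    PowerSeries.map (Polynomial.evalRingHom ((k:ℕ):ℚ)) LP = Sig k := by
  ext m
  rw [coeff_map, LP, coeff_mk, Sig, map_sum]
  by_cases hm : m = 0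
  · subst hm
    simp [lgeo, coeff_mk]
  · rw [if_neg hm, Polynomial.coe_evalRingHom, Polynomial.eval_mul, Polynomial.eval_C, eval_Pp,
      Finset.mul_sum]
    refine Finset.sum_congr rfl fun j _ => ?_
    rw [lgeo, coeff_mk, if_neg hm, inv_mul_eq_div]

lemma eval_HP (n k : ℕ) : (HP n).eval ((k:ℕ):ℚ) = aa n k := by
  rw [HP, aa, Hser, ← map_LP k,
    ← map_expS (Polynomial.evalRingHom ((k:ℕ):ℚ))
      (fun q p => by simp [Polynomial.eval_smul]) LP,
    coeff_map, Polynomial.coe_evalRingHom]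

noncomputable def KL : (Polynomial ℚ)⟦X⟧ :=
  PowerSeries.C Polynomial.X *
    PowerSeries.map (Polynomial.C : ℚ →+* Polynomial ℚ) Lser

noncomputable def QP (n : ℕ) : Polynomial ℚ :=
  (∏ i ∈ range n, (Polynomial.X + Polynomial.C ((i:ℚ)+1))) * coeff n (expS KL)

@[simp] lemma constantCoeff_KL : constantCoeff KL = 0 := by
  rw [KL, map_mul, constantCoeff_C]
  have : constantCoeff (PowerSeries.map (Polynomial.C : ℚ →+* Polynomial ℚ) Lser)
      = Polynomial.C (constantCoeff Lser) := by
    rw [← coeff_zero_eq_constantCoeff_apply, coeff_map, coeff_zero_eq_constantCoeff_apply]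
  rw [this, constantCoeff_Lser, map_zero, mul_zero]

lemma map_KL (k : ℕ) :
    PowerSeries.map (Polynomial.evalRingHom ((k:ℕ):ℚ)) KL = ((k:ℕ) • Lser : ℚ⟦X⟧) := by
  ext m
  rw [coeff_map, KL, coeff_C_mul, coeff_map, map_mul, Polynomial.coe_evalRingHom,
    Polynomial.eval_X, Polynomial.eval_C, map_nsmul, nsmul_eq_mul]

lemma expS_KL_eval (k : ℕ) :
    PowerSeries.map (Polynomial.evalRingHom ((k:ℕ):ℚ)) (expS KL) = Eser ^ k := by
  rw [map_expS _ (fun q p => by simp [Polynomial.eval_smul]) KL, map_KL,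
    expS_nsmul constantCoeff_Lser, expS_Lser]

lemma eval_QP (n k : ℕ) : (QP n).eval ((k:ℕ):ℚ) = bb n k := by
  rw [QP, bb, Polynomial.eval_mul, Polynomial.eval_prod]
  congr 1
  · refine Finset.prod_congr rfl fun i _ => ?_
    rw [Polynomial.eval_add, Polynomial.eval_X, Polynomial.eval_C]
    ring
  · have h : Polynomial.eval ((k:ℕ):ℚ) (coeff n (expS KL))
        = coeff n (PowerSeries.map (Polynomial.evalRingHom ((k:ℕ):ℚ)) (expS KL)) := by
      rw [coeff_map, Polynomial.coe_evalRingHom]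
    rw [h, expS_KL_eval]

lemma HP_eq_QP (n : ℕ) : HP n = QP n := by
  have hroot : {x : ℚ | (HP n - QP n).IsRoot x}.Infinite := by
    apply Set.infinite_of_injective_forall_mem (f := fun k : ℕ => ((k:ℕ):ℚ)) Nat.cast_injective
    intro k
    show (HP n - QP n).IsRoot ((k:ℕ):ℚ)
    rw [Polynomial.IsRoot, Polynomial.eval_sub, eval_HP, eval_QP, aa_eq_bb, sub_self]
  have h0 := Polynomial.eq_zero_of_infinite_isRoot _ hroot
  exact sub_eq_zero.mp h0


/-! ### Coefficient extraction -/

lemma coeff2_mul (p q : Polynomial ℚ) :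
    (p*q).coeff 2 = p.coeff 0 * q.coeff 2 + p.coeff 1 * q.coeff 1 + p.coeff 2 * q.coeff 0 := by
  rw [Polynomial.coeff_mul, Finset.Nat.sum_antidiagonal_eq_sum_range_succ_mk,
    Finset.sum_range_succ, Finset.sum_range_succ, Finset.sum_range_one]

lemma coeff1_mul (p q : Polynomial ℚ) :
    (p*q).coeff 1 = p.coeff 0 * q.coeff 1 + p.coeff 1 * q.coeff 0 := by
  rw [Polynomial.coeff_mul, Finset.Nat.sum_antidiagonal_eq_sum_range_succ_mk,
    Finset.sum_range_succ, Finset.sum_range_one]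

/-- coefficients of `LP` are divisible by `X` -/
lemma X_dvd_coeff_LP (j : ℕ) : Polynomial.X ∣ coeff j LP := by
  rw [LP, coeff_mk]
  by_cases hj : j = 0
  · rw [if_pos hj]; exact dvd_zero _
  · rw [if_neg hj]
    exact Dvd.dvd.mul_left (Polynomial.X_dvd_iff.mpr (coeff_Pp_zero j)) _

lemma X_dvd_coeff_KL (j : ℕ) : Polynomial.X ∣ coeff j KL := by
  rw [KL, coeff_C_mul]
  exact dvd_mul_right _ _

lemma X_pow_dvd_coeff_pow (M : (Polynomial ℚ)⟦X⟧) (hM : ∀ j, Polynomial.X ∣ coeff j M) :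
    ∀ (m j : ℕ), Polynomial.X ^ m ∣ coeff j (M ^ m) := by
  intro m
  induction m with
  | zero => intro j; simpa using one_dvd _
  | succ m ih =>
    intro j
    have hMs : M ^ (m+1) = M ^ m * M := pow_succ M m
    rw [hMs, coeff_mul]
    apply Finset.dvd_sum
    intro p _
    rw [pow_succ]
    exact mul_dvd_mul (ih p.1) (hM p.2)

lemma coeff_coeff_pow_eq_zero (M : (Polynomial ℚ)⟦X⟧) (hM : ∀ j, Polynomial.X ∣ coeff j M)
    {m r : ℕ} (h : r < m) (j : ℕ) : (coeff j (M ^ m)).coeff r = 0 := by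
  obtain ⟨q, hq⟩ := X_pow_dvd_coeff_pow M hM m j
  rw [hq, mul_comm, Polynomial.coeff_mul_X_pow', if_neg (by omega)]

noncomputable def qb (j : ℕ) : ℚ := bernoulli' j / j

lemma coeff0_LP (j : ℕ) : (coeff j LP).coeff 0 = 0 := by
  rw [LP, coeff_mk]
  by_cases hj : j = 0
  · rw [if_pos hj, Polynomial.coeff_zero]
  · rw [if_neg hj, Polynomial.coeff_C_mul, coeff_Pp_zero, mul_zero]

lemma coeff1_LP (j : ℕ) : (coeff j LP).coeff 1 = qb j := by
  rw [LP, coeff_mk, qb]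
  by_cases hj : j = 0
  · rw [if_pos hj, hj]
    norm_num
  · rw [if_neg hj, Polynomial.coeff_C_mul, coeff_Pp_one, inv_mul_eq_div]

lemma coeff2_HP (n : ℕ) (hn : 2 ≤ n) :
    (HP n).coeff 2 = bernoulli' (n-1)/2
      + (1/2) * ∑ p ∈ antidiagonal n, qb p.1 * qb p.2 := by
  rw [HP, expS, coeff_mk, Polynomial.finset_sum_coeff]
  have hsub : (range 3) ⊆ range (n+1) := Finset.range_subset_range.mpr (by omega)
  rw [← Finset.sum_subset hsub (by
    intro m _ hm
    rw [Finset.mem_range] at hm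
    push_neg at hm
    rw [Polynomial.coeff_smul, coeff_coeff_pow_eq_zero LP X_dvd_coeff_LP (by omega), smul_zero])]
  rw [Finset.sum_range_succ, Finset.sum_range_succ, Finset.sum_range_one]
  have t0 : ((Nat.factorial 0 : ℚ)⁻¹ • coeff n (LP ^ 0)).coeff 2 = 0 := by
    rw [pow_zero, PowerSeries.coeff_one, if_neg (by omega)]
    simp
  have t1 : ((Nat.factorial 1 : ℚ)⁻¹ • coeff n (LP ^ 1)).coeff 2
      = bernoulli' (n-1)/2 := by
    rw [pow_one, Polynomial.coeff_smul, LP, coeff_mk, if_neg (by omega),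
      Polynomial.coeff_C_mul, coeff_Pp_two n (by omega)]
    have hn0 : (n:ℚ) ≠ 0 := by
      have : (0:ℚ) < (n:ℚ) := by exact_mod_cast (by omega : 0 < n)
      exact this.ne'
    simp only [Nat.factorial, Nat.cast_one, inv_one, one_smul, smul_eq_mul]
    field_simp
    simp
  have t2 : ((Nat.factorial 2 : ℚ)⁻¹ • coeff n (LP ^ 2)).coeff 2
      = (1/2) * ∑ p ∈ antidiagonal n, qb p.1 * qb p.2 := by
    rw [Polynomial.coeff_smul, pow_two, coeff_mul, Polynomial.finset_sum_coeff]
    have : ∀ p ∈ antidiagonal n,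
        (coeff p.1 LP * coeff p.2 LP).coeff 2
        = qb p.1 * qb p.2 := by
      intro p _
      rw [coeff2_mul, coeff0_LP, coeff0_LP, coeff1_LP, coeff1_LP]
      ring
    rw [Finset.sum_congr rfl this]
    show ((2:ℚ))⁻¹ • _ = _
    rw [smul_eq_mul]
    ring
  rw [t0, t1, t2]
  ring


noncomputable def PRod (n : ℕ) : Polynomial ℚ :=
  ∏ i ∈ range n, (Polynomial.X + Polynomial.C ((i:ℚ)+1))

noncomputable def Hsum (n : ℕ) : ℚ := ∑ j ∈ Icc 1 n, 1/(j:ℚ)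

lemma coeff0_PRod (n : ℕ) : (PRod n).coeff 0 = (n.factorial : ℚ) := by
  induction n with
  | zero => simp [PRod]
  | succ n ih =>
    rw [PRod, Finset.prod_range_succ, Polynomial.mul_coeff_zero, ← PRod, ih]
    rw [Polynomial.coeff_add, Polynomial.coeff_X_zero, Polynomial.coeff_C_zero, zero_add]
    rw [Nat.factorial_succ]
    push_cast
    ring

lemma coeff1_PRod (n : ℕ) : (PRod n).coeff 1 = (n.factorial:ℚ) * Hsum n := by
  induction n with
  | zero => simp [PRod, Hsum, Polynomial.coeff_one]
  | succ n ih =>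
    rw [PRod, Finset.prod_range_succ, coeff1_mul, ← PRod, ih, coeff0_PRod]
    have e1 : (Polynomial.X + Polynomial.C ((n:ℚ)+1)).coeff 1 = 1 := by
      rw [Polynomial.coeff_add, Polynomial.coeff_X_one, Polynomial.coeff_C, if_neg one_ne_zero,
        add_zero]
    have e0 : (Polynomial.X + Polynomial.C ((n:ℚ)+1)).coeff 0 = (n:ℚ)+1 := by
      rw [Polynomial.coeff_add, Polynomial.coeff_X_zero, Polynomial.coeff_C_zero, zero_add]
    rw [e1, e0, Hsum, Hsum, Finset.sum_Icc_succ_top (by omega : 1 ≤ n+1)]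
    have hne : ((n:ℚ)+1) ≠ 0 := by positivity
    rw [Nat.factorial_succ]
    push_cast
    field_simp
    ring

lemma coeff_KL_pow (m j : ℕ) :
    coeff j (KL ^ m)
      = Polynomial.C (coeff j (Lser ^ m)) * Polynomial.X ^ m := by
  rw [KL, mul_pow, ← map_pow, coeff_C_mul, ← map_pow, coeff_map]
  ring

lemma coeff_T (n r : ℕ) (hr : r ≤ n) (hn : 1 ≤ n) :
    (coeff n (expS KL)).coeff r
      = (r.factorial:ℚ)⁻¹ * coeff n (Lser ^ r) := by
  rw [expS, coeff_mk, Polynomial.finset_sum_coeff]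
  rw [Finset.sum_eq_single r]
  · rw [Polynomial.coeff_smul, coeff_KL_pow, Polynomial.coeff_C_mul, Polynomial.coeff_X_pow,
      if_pos rfl, mul_one, smul_eq_mul]
  · intro m _ hmr
    rw [Polynomial.coeff_smul, coeff_KL_pow, Polynomial.coeff_C_mul, Polynomial.coeff_X_pow,
      if_neg (show ¬ r = m from fun h => hmr h.symm), mul_zero, smul_zero]
  · intro hr'
    exact absurd (Finset.mem_range.mpr (by omega)) hr'

lemma coeff2_QP (n : ℕ) (hn : 2 ≤ n) :
    (QP n).coeff 2 = (n.factorial:ℚ) * ((2:ℚ)⁻¹ * coeff n (Lser^2))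
      + ((n.factorial:ℚ) * Hsum n) * coeff n Lser := by
  have hQP : QP n = PRod n * coeff n (expS KL) := rfl
  rw [hQP, coeff2_mul, coeff0_PRod, coeff1_PRod]
  rw [coeff_T n 0 (by omega) (by omega), coeff_T n 1 (by omega) (by omega),
    coeff_T n 2 (by omega) (by omega)]
  rw [pow_zero, PowerSeries.coeff_one, if_neg (by omega : n ≠ 0)]
  norm_num [Nat.factorial]


lemma coeff_Lser (j : ℕ) :
    coeff j Lser = if j = 0 then 0 else bernoulli' j / (j * j.factorial) := by
  rw [Lser, coeff_mk]

lemma master (n : ℕ) (hn : 2 ≤ n) :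
    bernoulli' (n-1)/2 + (1/2) * ∑ p ∈ antidiagonal n, qb p.1 * qb p.2
      = (n.factorial:ℚ) * ((2:ℚ)⁻¹ * coeff n (Lser^2))
        + ((n.factorial:ℚ) * Hsum n) * coeff n Lser := by
  rw [← coeff2_HP n hn, ← coeff2_QP n hn, HP_eq_QP n]

lemma fact_L2 (n : ℕ) :
    (n.factorial:ℚ) * coeff n (Lser^2)
      = ∑ p ∈ antidiagonal n, (n.choose p.1 : ℚ) * (qb p.1 * qb p.2) := by
  rw [pow_two, coeff_mul, Finset.mul_sum]
  refine Finset.sum_congr rfl fun p hp => ?_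
  rw [Finset.HasAntidiagonal.mem_antidiagonal] at hp
  rw [coeff_Lser, coeff_Lser]
  by_cases h1 : p.1 = 0
  · rw [if_pos h1, h1, qb]
    simp
  · by_cases h2 : p.2 = 0
    · rw [if_neg h1, if_pos h2, h2, qb, qb]
      simp
    · rw [if_neg h1, if_neg h2, qb, qb]
      have ha : p.1 ≤ n := by omega
      have hq : (n.choose p.1 : ℚ) * (p.1.factorial : ℚ) * (p.2.factorial : ℚ)
          = (n.factorial : ℚ) := by
        have := Nat.choose_mul_factorial_mul_factorial ha
        rw [show n - p.1 = p.2 by omega] at this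
        exact_mod_cast congrArg Nat.cast this
      have f1 : (p.1.factorial : ℚ) ≠ 0 := by exact_mod_cast p.1.factorial_ne_zero
      have f2 : (p.2.factorial : ℚ) ≠ 0 := by exact_mod_cast p.2.factorial_ne_zero
      have g1 : (p.1 : ℚ) ≠ 0 := by exact_mod_cast h1
      have g2 : (p.2 : ℚ) ≠ 0 := by exact_mod_cast h2
      field_simp
      linear_combination (-(bernoulli' p.1 * bernoulli' p.2)) * hq

end Miki

/-- Miki's identity: for even `n ≥ 4`,
`2·H_n·B_n = ∑_{k=2}^{n-2} (n/(k(n-k)))·(1 - C(n,k))·B_k·B_{n-k}`. -/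
theorem miki_identity (n : ℕ) (hn : Even n) (h4 : 4 ≤ n) :
    2 * (∑ j ∈ Finset.Icc 1 n, (1 : ℚ) / j) * bernoulli n =
      ∑ k ∈ Finset.Icc 2 (n - 2),
        ((n : ℚ) / ((k : ℚ) * ((n : ℚ) - (k : ℚ)))) * (1 - (n.choose k : ℚ)) *
          bernoulli k * bernoulli (n - k) := by
  have hn2 : 2 ≤ n := by omega
  have hn0 : (n:ℚ) ≠ 0 := by exact_mod_cast (by omega : n ≠ 0)
  have hfac : ((n.factorial:ℚ)) ≠ 0 := by exact_mod_cast n.factorial_ne_zero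
  have hB' : bernoulli' (n-1) = 0 :=
    bernoulli'_eq_zero_of_odd (Nat.Even.sub_odd (by omega) hn odd_one) (by omega)
  have hqb1 : Miki.qb (n-1) = 0 := by rw [Miki.qb, hB', zero_div]
  have hl : (n.factorial:ℚ) * (PowerSeries.coeff n Miki.Lser) = bernoulli n / (n:ℚ) := by
    rw [Miki.coeff_Lser, if_neg (by omega : ¬ n = 0),
      bernoulli_eq_bernoulli'_of_ne_one (by omega : n ≠ 1)]
    field_simp
  have hm := Miki.master n hn2
  have hf := Miki.fact_L2 n
  rw [hB'] at hm
  have hS : ∑ p ∈ Finset.HasAntidiagonal.antidiagonal n, (1 - (n.choose p.1:ℚ)) * (Miki.qb p.1 * Miki.qb p.2)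
      = 2 * Miki.Hsum n * bernoulli n / n := by
    have expand : ∑ p ∈ Finset.HasAntidiagonal.antidiagonal n, (1 - (n.choose p.1:ℚ)) * (Miki.qb p.1 * Miki.qb p.2)
        = (∑ p ∈ Finset.HasAntidiagonal.antidiagonal n, Miki.qb p.1 * Miki.qb p.2)
          - ∑ p ∈ Finset.HasAntidiagonal.antidiagonal n, (n.choose p.1:ℚ) * (Miki.qb p.1 * Miki.qb p.2) := by
      rw [← Finset.sum_sub_distrib]
      exact Finset.sum_congr rfl fun p _ => by ring
    rw [expand]
    linear_combination 2 * hm + hf + 2 * Miki.Hsum n * hl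
  have hrange : ∑ p ∈ Finset.HasAntidiagonal.antidiagonal n, (1 - (n.choose p.1:ℚ)) * (Miki.qb p.1 * Miki.qb p.2)
      = ∑ i ∈ Finset.range (n+1), (1 - (n.choose i:ℚ)) * (Miki.qb i * Miki.qb (n-i)) :=
    Finset.Nat.sum_antidiagonal_eq_sum_range_succ_mk _ n
  have hsubset : ∑ i ∈ Finset.range (n+1), (1 - (n.choose i:ℚ)) * (Miki.qb i * Miki.qb (n-i))
      = ∑ i ∈ Finset.Icc 2 (n-2), (1 - (n.choose i:ℚ)) * (Miki.qb i * Miki.qb (n-i)) := by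
    symm
    apply Finset.sum_subset
    · intro i hi
      rw [Finset.mem_Icc] at hi
      rw [Finset.mem_range]
      omega
    · intro i hi hni
      rw [Finset.mem_range] at hi
      rw [Finset.mem_Icc] at hni
      push_neg at hni
      rcases (by omega : i = 0 ∨ i = 1 ∨ i = n-1 ∨ i = n) with h|h|h|h
      · subst h
        simp [Miki.qb]
      · subst h
        rw [hqb1, mul_zero, mul_zero]
      · rw [h, hqb1, zero_mul, mul_zero]
      · subst h
        rw [Nat.sub_self]
        simp [Miki.qb]
  have hterm : ∀ i ∈ Finset.Icc 2 (n-2),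
      (n:ℚ) * ((1 - (n.choose i:ℚ)) * (Miki.qb i * Miki.qb (n-i)))
      = ((n : ℚ) / ((i : ℚ) * ((n : ℚ) - (i : ℚ)))) * (1 - (n.choose i : ℚ)) *
          bernoulli i * bernoulli (n - i) := by
    intro i hi
    rw [Finset.mem_Icc] at hi
    rw [bernoulli_eq_bernoulli'_of_ne_one (by omega : i ≠ 1),
      bernoulli_eq_bernoulli'_of_ne_one (by omega : n - i ≠ 1),
      Miki.qb, Miki.qb, Nat.cast_sub (by omega : i ≤ n)]
    have gi : (i:ℚ) ≠ 0 := by exact_mod_cast (by omega : i ≠ 0)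
    have gni : ((n:ℚ) - (i:ℚ)) ≠ 0 := by
      have hc : ((n - i : ℕ):ℚ) = (n:ℚ) - i := Nat.cast_sub (by omega)
      rw [← hc]
      exact_mod_cast (by omega : ¬ n - i = 0)
    field_simp
  calc 2 * (∑ j ∈ Finset.Icc 1 n, (1:ℚ)/j) * bernoulli n
      = (n:ℚ) * (2 * Miki.Hsum n * bernoulli n / n) := by
        rw [Miki.Hsum]
        field_simp
    _ = (n:ℚ) * ∑ i ∈ Finset.Icc 2 (n-2), (1 - (n.choose i:ℚ)) * (Miki.qb i * Miki.qb (n-i)) := by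
        rw [← hsubset, ← hrange, hS]
    _ = ∑ i ∈ Finset.Icc 2 (n-2), (n:ℚ) * ((1 - (n.choose i:ℚ)) * (Miki.qb i * Miki.qb (n-i))) :=
        Finset.mul_sum _ _ _
    _ = _ := Finset.sum_congr rfl hterm
end
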